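/- Let V be a finite nonempty set, E a finite set of edges with source and target maps s, t : E → V, and assume that for every pair of vertices u, v ∈ V there exists at least one edge e ∈ E with s(e) = u and t(e) = v (positive transition matrix). Let G be an abelian group and f : E → G any function. A closed path of length n ≥ 1 is a finite sequence (e₁,…,e_n) ∈ Eⁿ with t(e_i) = s(e_{i+1}) for 1 ≤ i < n and t(e_n) = s(e₁); its weight is w(e₁,…,e_n) = Σ_{i=1}^{n} f(e_i). Then the set Δ = {w(c₁) − w(c₂) : n ≥ 1 and c₁, c₂ are closed paths of length n} is an additive subgroup of G. -/

import Mathlib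

namespace St14

variable {V E : Type*} {G : Type*} [AddCommGroup G]

/-- A nonempty edge path from `u` to `v`. -/
inductive IsPath (s t : E → V) : V → V → List E → Prop
  | single (e : E) : IsPath s t (s e) (t e) [e]
  | append {u v w : V} {l₁ l₂ : List E} :
      IsPath s t u v l₁ → IsPath s t v w l₂ → IsPath s t u w (l₁ ++ l₂)

theorem IsPath.facts {s t : E → V} {u v : V} {l : List E} (h : IsPath s t u v l) :
    ∃ hne : l ≠ [], l.Chain' (fun e e' => t e = s e') ∧
      s (l.head hne) = u ∧ t (l.getLast hne) = v := by
  induction h with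
  | single e => exact ⟨by simp, List.isChain_singleton _, by simp, by simp⟩
  | append h₁ h₂ ih₁ ih₂ =>
    obtain ⟨hne₁, hc₁, hh₁, hl₁⟩ := ih₁
    obtain ⟨hne₂, hc₂, hh₂, hl₂⟩ := ih₂
    refine ⟨by simp [hne₁], ?_, ?_, ?_⟩
    · simp only [List.Chain', List.isChain_append]
      refine ⟨hc₁, hc₂, ?_⟩
      intro x hx y hy
      rw [List.getLast?_eq_getLast hne₁, Option.mem_some_iff] at hx
      rw [List.head?_eq_head hne₂, Option.mem_some_iff] at hy
      subst hx; subst hy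
      rw [hl₁, hh₂]
    · rw [List.head_append_of_ne_nil]
      exact hh₁
    · rw [List.getLast_append_of_ne_nil _ hne₂]
      exact hl₂

theorem isPath_ofFn (s t : E → V) {n : ℕ} (c : Fin (n + 1) → E)
    (h : ∀ i : Fin n, t (c i.castSucc) = s (c i.succ)) :
    IsPath s t (s (c 0)) (t (c (Fin.last n))) (List.ofFn c) := by
  induction n with
  | zero => simpa [List.ofFn_succ] using IsPath.single (c 0)
  | succ n ih =>
    have h' : ∀ i : Fin n, t ((c ∘ Fin.succ) i.castSucc) = s ((c ∘ Fin.succ) i.succ) := by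
      intro i
      have := h i.succ
      simpa only [Function.comp_apply, Fin.succ_castSucc] using this
    have hstep : t (c 0) = s ((c ∘ Fin.succ) 0) := by
      have := h 0
      simpa using this
    have := (IsPath.single (s := s) (t := t) (c 0)).append (hstep ▸ ih (c ∘ Fin.succ) h')
    rw [List.ofFn_succ]
    simpa [Fin.succ_last] using this

theorem isPath_of_cyclic (s t : E → V) {n : ℕ} (c : Fin (n + 1) → E)
    (h : ∀ i : Fin (n + 1), t (c i) = s (c (i + 1))) :
    IsPath s t (s (c 0)) (s (c 0)) (List.ofFn c) := by
  have h' : ∀ i : Fin n, t (c i.castSucc) = s (c i.succ) := by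
    intro i
    have := h i.castSucc
    have e : i.castSucc + 1 = i.succ := by
      ext
      simp [Fin.add_def, Nat.mod_eq_of_lt (by omega : (i : ℕ) + 1 < n + 1)]
    rwa [e] at this
  have hlast : t (c (Fin.last n)) = s (c 0) := by
    have := h (Fin.last n)
    rwa [Fin.last_add_one] at this
  have := isPath_ofFn s t c h'
  rwa [hlast] at this

theorem exists_cyclic_of_isPath {s t : E → V} {v : V} {l : List E}
    (h : IsPath s t v v l) {n : ℕ} (hlen : l.length = n + 1) (f : E → G) :
    ∃ c : Fin (n + 1) → E, (∀ i : Fin (n + 1), t (c i) = s (c (i + 1))) ∧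
      (∑ i : Fin (n + 1), f (c i)) = (l.map f).sum := by
  obtain ⟨hne, hchain, hhead, hlast⟩ := h.facts
  refine ⟨fun i => l.get (Fin.cast hlen.symm i), ?_, ?_⟩
  · intro i
    show t (l.get (Fin.cast hlen.symm i)) = s (l.get (Fin.cast hlen.symm (i + 1)))
    rcases lt_or_eq_of_le (Nat.lt_succ_iff.mp i.isLt) with hi | hi
    · -- interior step
      have hidx : (i : ℕ) < l.length - 1 := by omega
      have hmain := List.isChain_iff_getElem.mp hchain (i : ℕ) (by omega)
      have e1 : Fin.cast hlen.symm i = ⟨(i : ℕ), by omega⟩ := rfl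
      have e2 : Fin.cast hlen.symm (i + 1) = ⟨(i : ℕ) + 1, by omega⟩ := by
        ext
        simp [Fin.add_def, Nat.mod_eq_of_lt (by omega : (i : ℕ) + 1 < n + 1)]
      rw [e1, e2]
      exact hmain
    · -- wrap-around
      have h1 : (Fin.cast hlen.symm i : Fin l.length) = ⟨l.length - 1, by omega⟩ := by
        ext; simp [hi, hlen]
      have h2 : i + 1 = 0 := by
        ext; simp [Fin.add_def, hi]
      have h3 : l.get (Fin.cast hlen.symm (0 : Fin (n + 1))) = l.head hne := by
        symm
        apply List.head_eq_getElem_zero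
      rw [h1, h2, h3, List.get_eq_getElem, ← List.getLast_eq_getElem hne, hlast, hhead]
  · rw [← List.ofFn_getElem_eq_map l f, List.sum_ofFn]
    exact Fintype.sum_equiv (finCongr hlen.symm) _ _ (fun i => rfl)

end St14

open St14

/-- The set of differences of weights of closed paths of equal
length (≥ 1) in a finite directed multigraph with positive transition matrix is
a subgroup of `G`.  A closed path of length `n + 1` is `c : Fin (n+1) → E` with
`t (c i) = s (c (i+1))` for all `i` (addition in `Fin (n+1)`, so the condition
at `i = n` closes the path). -/
theorem statement14 {V E : Type*} [Finite V] [Finite E] [Nonempty V]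
    {G : Type*} [AddCommGroup G]
    (s t : E → V) (hpos : ∀ u v : V, ∃ e : E, s e = u ∧ t e = v)
    (f : E → G) :
    ∃ H : AddSubgroup G, (H : Set G) =
      {g : G | ∃ n : ℕ, ∃ c₁ c₂ : Fin (n + 1) → E,
        (∀ i : Fin (n + 1), t (c₁ i) = s (c₁ (i + 1))) ∧
        (∀ i : Fin (n + 1), t (c₂ i) = s (c₂ (i + 1))) ∧
        g = (∑ i : Fin (n + 1), f (c₁ i)) - (∑ i : Fin (n + 1), f (c₂ i))} := by
  classical
  set v0 : V := Classical.arbitrary V with hv0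
  -- connecting edges
  choose a ha₁ ha₂ using fun u => hpos v0 u
  choose b hb₁ hb₂ using fun u => hpos u v0
  set wt : List E → G := fun l => (l.map f).sum with hwt
  -- normalized carrier: differences of weights of equal-length loops at v0
  set T : Set G := {g : G | ∃ l₁ l₂ : List E, IsPath s t v0 v0 l₁ ∧ IsPath s t v0 v0 l₂ ∧
      l₁.length = l₂.length ∧ g = wt l₁ - wt l₂} with hT
  have pa : ∀ u : V, IsPath s t v0 u [a u] := by
    intro u
    have := IsPath.single (s := s) (t := t) (a u)
    rwa [ha₁ u, ha₂ u] at this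
  have pb : ∀ u : V, IsPath s t u v0 [b u] := by
    intro u
    have := IsPath.single (s := s) (t := t) (b u)
    rwa [hb₁ u, hb₂ u] at this
  have h0 : (0 : G) ∈ T := by
    obtain ⟨e, he₁, he₂⟩ := hpos v0 v0
    have hp : IsPath s t v0 v0 [e] := by
      have := IsPath.single (s := s) (t := t) e
      rwa [he₁, he₂] at this
    exact ⟨[e], [e], hp, hp, rfl, by simp⟩
  have hadd : ∀ {x y : G}, x ∈ T → y ∈ T → x + y ∈ T := by
    rintro x y ⟨l₁, l₂, hl₁, hl₂, hlen, rfl⟩ ⟨k₁, k₂, hk₁, hk₂, hklen, rfl⟩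
    refine ⟨l₁ ++ k₁, l₂ ++ k₂, hl₁.append hk₁, hl₂.append hk₂, by simp [hlen, hklen], ?_⟩
    simp only [hwt, List.map_append, List.sum_append]
    abel
  have hneg : ∀ {x : G}, x ∈ T → -x ∈ T := by
    rintro x ⟨l₁, l₂, hl₁, hl₂, hlen, rfl⟩
    exact ⟨l₂, l₁, hl₂, hl₁, hlen.symm, by abel⟩
  refine ⟨{ carrier := T, zero_mem' := h0, add_mem' := hadd, neg_mem' := hneg }, ?_⟩
  -- carrier equals the stated set
  ext g
  simp only [AddSubgroup.coe_set_mk, Set.mem_setOf_eq]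
  constructor
  · -- T ⊆ S
    rintro ⟨l₁, l₂, hl₁, hl₂, hlen, rfl⟩
    obtain ⟨hne₁, -, -, -⟩ := hl₁.facts
    have hpos₁ : l₁.length ≠ 0 := by simpa using hne₁
    obtain ⟨n, hn⟩ : ∃ n, l₁.length = n + 1 := ⟨l₁.length - 1, by omega⟩
    obtain ⟨c₁, hc₁, hs₁⟩ := exists_cyclic_of_isPath hl₁ hn f
    obtain ⟨c₂, hc₂, hs₂⟩ := exists_cyclic_of_isPath hl₂ (hlen ▸ hn) f
    exact ⟨n, c₁, c₂, hc₁, hc₂, by rw [hs₁, hs₂]⟩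
  · -- S ⊆ T
    rintro ⟨n, c₁, c₂, hc₁, hc₂, rfl⟩
    set u₁ := s (c₁ 0)
    set u₂ := s (c₂ 0)
    have p₁ : IsPath s t u₁ u₁ (List.ofFn c₁) := isPath_of_cyclic s t c₁ hc₁
    have p₂ : IsPath s t u₂ u₂ (List.ofFn c₂) := isPath_of_cyclic s t c₂ hc₂
    refine ⟨[a u₁] ++ List.ofFn c₁ ++ [b u₁] ++ ([a u₂] ++ [b u₂]),
            [a u₂] ++ List.ofFn c₂ ++ [b u₂] ++ ([a u₁] ++ [b u₁]),
            ((((pa u₁).append p₁).append (pb u₁)).append ((pa u₂).append (pb u₂))),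
            ((((pa u₂).append p₂).append (pb u₂)).append ((pa u₁).append (pb u₁))),
            by simp, ?_⟩
    simp only [hwt, List.map_append, List.sum_append, List.map_ofFn, List.sum_ofFn,
      List.map_cons, List.map_nil, List.sum_cons, List.sum_nil, Function.comp]
    abel
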